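/- Let (W,S) be a Coxeter system of finite rank. Then (W,S) is chordal if and only if every maximal subset of S that is not separated by a complete subset is itself complete; equivalently, every vertex group of a visual reduced JSJ decomposition of (W,S) over 𝓕𝓐 is a complete visual subgroup of (W,S). -/

import Mathlib

universe u

variable {W : Type u} [Group W]

/-- `S` is a set of Coxeter generators of `W`: `W` has the Coxeter presentation
`⟨S ∣ (st)^{m(s,t)} = 1⟩` whose simple reflections are the elements of `S`. -/
def IsCoxeterGeneratingSet (W : Type u) [Group W] (S : Set W) : Prop :=
  ∃ (M : CoxeterMatrix S) (cs : CoxeterSystem M W), ∀ s : S, cs.simple s = (s : W)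

/-- The presentation diagram of a Coxeter system, induced on the vertex set `A ⊆ W`:
distinct `s, t ∈ A` are adjacent exactly when `s * t` has finite order
(recall `orderOf x = 0` exactly when `x` has infinite order). -/
def presGraph (W : Type u) [Group W] (A : Set W) : SimpleGraph W where
  Adj s t := s ≠ t ∧ s ∈ A ∧ t ∈ A ∧ orderOf (s * t) ≠ 0
  symm := by
    constructor
    rintro s t ⟨h1, h2, h3, h4⟩
    refine ⟨h1.symm, h3, h2, ?_⟩
    have : SemiconjBy s (t * s) (s * t) := by unfold SemiconjBy; group
    rwa [this.orderOf_eq s]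
  loopless := by constructor; rintro s ⟨h, -⟩; exact h rfl

/-- `T` separates `R`: two elements of `R − T` lie in different connected components of the
induced subgraph of the presentation diagram on `R − T`. -/
def Separates (W : Type u) [Group W] (R T : Set W) : Prop :=
  ∃ a ∈ R \ T, ∃ b ∈ R \ T, ¬ (presGraph W (R \ T)).Reachable a b

/-- A subset `C` is complete if every product of two of its elements has finite order. -/
def IsCompleteSet (W : Type u) [Group W] (C : Set W) : Prop :=
  ∀ s ∈ C, ∀ t ∈ C, orderOf (s * t) ≠ 0

/-- `R` is separated by a complete subset of `R`. -/
def SeparatedByComplete (W : Type u) [Group W] (R : Set W) : Prop :=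
  ∃ T ⊆ R, IsCompleteSet W T ∧ Separates W R T

/-- `(S1, S0, S2)` is a separation of `S`. -/
def IsSeparation (W : Type u) [Group W] (S S1 S0 S2 : Set W) : Prop :=
  S1 ∪ S2 = S ∧ S1 ∩ S2 = S0 ∧ (S1 \ S0).Nonempty ∧ (S2 \ S0).Nonempty ∧
    ∀ a ∈ S1 \ S0, ∀ b ∈ S2 \ S0, orderOf (a * b) = 0

/-- `S0` is an `(a,b)`-separator of `S`: `a` and `b` lie in different connected components
of the induced subgraph of the presentation diagram on `S − S0`. -/
def IsABSeparator (W : Type u) [Group W] (S S0 : Set W) (a b : W) : Prop :=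
  a ∈ S \ S0 ∧ b ∈ S \ S0 ∧ ¬ (presGraph W (S \ S0)).Reachable a b

/-- `S0` is a relative minimal separator of `S`: a minimal `(a,b)`-separator of `S`
for some `a, b`. -/
def RelMinSeparator (W : Type u) [Group W] (S S0 : Set W) : Prop :=
  ∃ a b, IsABSeparator W S S0 a b ∧ ∀ T ⊂ S0, ¬ IsABSeparator W S T a b

/-- The set `wTw⁻¹`. -/
def conjSet (w : W) (T : Set W) : Set W := (fun x => w * x * w⁻¹) '' T

/-- `S0` is a c-minimal separator of `S`: `S0` separates `S` and no conjugate of a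
proper subset of `S0` that lies in `S` separates `S`. -/
def CMinSeparator (W : Type u) [Group W] (S S0 : Set W) : Prop :=
  Separates W S S0 ∧
    ¬ ∃ (w : W) (T : Set W), T ⊆ S0 ∧ T ≠ S0 ∧ conjSet w T ⊆ S ∧ Separates W S (conjSet w T)

/-- The union of the bags over the component of the tree `T` minus the edge `{u,v}`
containing `u`. -/
def edgeSide {W : Type u} [Group W] {V : Type} (T : SimpleGraph V) (bag : V → Set W)
    (u v : V) : Set W :=
  ⋃ w ∈ {w | (T.deleteEdges {s(u, v)}).Reachable u w}, bag w

/-- A visual tree decomposition of the Coxeter system `(W, S)`: a finite nonempty tree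
with bags `R_v ⊆ S` covering `S` such that for each edge `{u,v}`, the unions `A`, `B` of
bags over the two components of the tree minus the edge satisfy `A ∩ B = R_u ∩ R_v` and
`m(a,b) = ∞` for `a ∈ A − R_u ∩ R_v`, `b ∈ B − R_u ∩ R_v`.  This exhibits `W` as an
iterated visual amalgamated product of the groups `⟨R_v⟩` over the groups `⟨R_u ∩ R_v⟩`. -/
structure VisualTreeDecomp (W : Type u) [Group W] (S : Set W) where
  V : Type
  fintypeV : Fintype V
  T : SimpleGraph V
  isTree : T.IsTree
  bag : V → Set W
  bag_subset : ∀ v, bag v ⊆ S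
  bags_cover : (⋃ v, bag v) = S
  inter_eq : ∀ u v, T.Adj u v →
    edgeSide T bag u v ∩ edgeSide T bag v u = bag u ∩ bag v
  infinite_order : ∀ u v, T.Adj u v →
    ∀ a ∈ edgeSide T bag u v \ (bag u ∩ bag v),
      ∀ b ∈ edgeSide T bag v u \ (bag u ∩ bag v), orderOf (a * b) = 0

/-- A visual tree decomposition is reduced if each edge set is a proper subset of
the two incident bags. -/
def VisualTreeDecomp.Reduced {W : Type u} [Group W] {S : Set W}
    (D : VisualTreeDecomp W S) : Prop :=
  ∀ u v, D.T.Adj u v → D.bag u ∩ D.bag v ⊂ D.bag u ∧ D.bag u ∩ D.bag v ⊂ D.bag v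

/-- A group `G` has property FA if every action of `G` by graph automorphisms and
without inversions on a (nonempty) tree has a global fixed vertex. -/
def HasPropertyFA (G : Type u) [Group G] : Prop :=
  ∀ (V : Type u) (T : SimpleGraph V), T.IsTree →
    ∀ [MulAction G V],
      (∀ (g : G) (a b : V), T.Adj a b → T.Adj (g • a) (g • b)) →
      (¬ ∃ (g : G) (a b : V), T.Adj a b ∧ g • a = b ∧ g • b = a) →
      ∃ x : V, ∀ g : G, g • x = x

/-- The class 𝓕𝓐 of subgroups of `W`: those contained in a subgroup with property FA. -/
def MemFA {W : Type u} [Group W] (H : Subgroup W) : Prop :=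
  ∃ K : Subgroup W, H ≤ K ∧ HasPropertyFA K

/-- A chord of a closed walk: an edge of the graph between two vertices of the walk
that is not an edge of the walk. -/
def SimpleGraph.Walk.HasChord {V : Type*} {G : SimpleGraph V} {v : V} (c : G.Walk v v) : Prop :=
  ∃ a b, a ∈ c.support ∧ b ∈ c.support ∧ G.Adj a b ∧ s(a, b) ∉ c.edges

/-- A graph is chordal if every cycle of length at least four has a chord. -/
def SimpleGraph.IsChordalGraph {V : Type*} (G : SimpleGraph V) : Prop :=
  ∀ (v : V) (c : G.Walk v v), c.IsCycle → 4 ≤ c.length → c.HasChord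

/-- The set of all conjugates of elements of `S`. -/
def ConjugatesOf (W : Type u) [Group W] (S : Set W) : Set W :=
  {x | ∃ s ∈ S, ∃ w : W, x = w * s * w⁻¹}

/-- `S` is sharp-angled with respect to `S'`: every pair `s, t ∈ S` with `2 < m(s,t) < ∞`
is conjugate by a single element into `S'`. -/
def SharpAngled (W : Type u) [Group W] (S S' : Set W) : Prop :=
  ∀ s ∈ S, ∀ t ∈ S, 2 < orderOf (s * t) →
    ∃ w : W, w * s * w⁻¹ ∈ S' ∧ w * t * w⁻¹ ∈ S'

/-- `S''` is obtained from `S` by an elementary twist `(S1, ℓ, S2)`. -/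
def ElemTwist (W : Type u) [Group W] (S S'' : Set W) : Prop :=
  ∃ (S1 S2 : Set W) (ℓ : W), S1 ∪ S2 = S ∧
    (∀ a ∈ S1 \ (S1 ∩ S2), ∀ b ∈ S2 \ (S1 ∩ S2), orderOf (a * b) = 0) ∧
    ℓ ∈ Subgroup.closure (S1 ∩ S2) ∧ conjSet ℓ (S1 ∩ S2) = S1 ∩ S2 ∧
    S'' = S1 ∪ conjSet ℓ S2

/-- Two sets of Coxeter generators are twist equivalent if one is obtained from the
other by a finite sequence of elementary twists. -/
def TwistEquiv (W : Type u) [Group W] (S S' : Set W) : Prop :=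
  Relation.ReflTransGen (ElemTwist W) S S'

/-- `(W, S)` satisfies the twist conjecture: every set `S'` of Coxeter generators of `W`
consisting of conjugates of elements of `S`, with `S` sharp-angled with respect to `S'`,
is twist equivalent to `S`. -/
def SatisfiesTwistConjecture (W : Type u) [Group W] (S : Set W) : Prop :=
  ∀ S' : Set W, IsCoxeterGeneratingSet W S' → S' ⊆ ConjugatesOf W S →
    SharpAngled W S S' → TwistEquiv W S S'

section ChordalAux

open SimpleGraph

private lemma presGraph_mono {A B : Set W} (h : A ⊆ B) : presGraph W A ≤ presGraph W B := by
  intro x y hxy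
  exact ⟨hxy.1, h hxy.2.1, h hxy.2.2.1, hxy.2.2.2⟩

private lemma supp_sub {A : Set W} : ∀ {u v : W} (p : (presGraph W A).Walk u v),
    u ∈ A → v ∈ A → ∀ x ∈ p.support, x ∈ A := by
  intro u v p
  induction p with
  | nil =>
    intro hu _ x hx
    rw [Walk.support_nil, List.mem_singleton] at hx
    exact hx ▸ hu
  | @cons a b c h q ih =>
    intro hu hv x hx
    rw [Walk.support_cons, List.mem_cons] at hx
    rcases hx with rfl | hx
    · exact hu
    · exact ih h.2.2.1 hv x hx

private lemma reach_of_supp {A B : Set W} : ∀ {u v : W} (p : (presGraph W A).Walk u v),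
    (∀ x ∈ p.support, x ∈ B) → (presGraph W B).Reachable u v := by
  intro u v p
  induction p with
  | nil => exact fun _ => Reachable.refl _
  | @cons a b c hadj q ih =>
    intro h
    have hab : (presGraph W B).Adj a b :=
      ⟨hadj.1, h a (by rw [Walk.support_cons]; exact List.mem_cons_self),
        h b (by rw [Walk.support_cons]; exact List.mem_cons_of_mem _ q.start_mem_support),
        hadj.2.2.2⟩
    exact hab.reachable.trans
      (ih fun x hx => h x (by rw [Walk.support_cons]; exact List.mem_cons_of_mem _ hx))

private lemma reach_mem_support {V' : Type*} {G : SimpleGraph V'} :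
    ∀ {u v : V'} (p : G.Walk u v) {x : V'}, x ∈ p.support → G.Reachable u x := by
  intro u v p
  induction p with
  | nil =>
    intro x hx
    rw [Walk.support_nil, List.mem_singleton] at hx
    exact hx ▸ Reachable.refl _
  | @cons a b c h q ih =>
    intro x hx
    rw [Walk.support_cons, List.mem_cons] at hx
    rcases hx with rfl | hx
    · exact Reachable.refl _
    · exact h.reachable.trans (ih hx)

private lemma exists_min_path {V' : Type*} {G : SimpleGraph V'} {u v : V'}
    (h : G.Reachable u v) :
    ∃ p : G.Walk u v, p.IsPath ∧ ∀ q : G.Walk u v, p.length ≤ q.length := by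
  classical
  have hex : ∃ n, ∃ p : G.Walk u v, p.length = n := by
    obtain ⟨w⟩ := h; exact ⟨w.length, w, rfl⟩
  obtain ⟨p, hp⟩ := Nat.find_spec hex
  refine ⟨p.bypass, p.bypass_isPath, fun q => ?_⟩
  refine le_trans p.length_bypass_le ?_
  rw [hp]
  exact Nat.find_min' hex ⟨q, rfl⟩

private lemma min_walk_adj_mem_edges {V' : Type*} {G : SimpleGraph V'} {x y : V'} :
    ∀ {u v : V'} (p : G.Walk u v), (∀ q : G.Walk u v, p.length ≤ q.length) →
      x ∈ p.support → y ∈ p.support → G.Adj x y → s(x, y) ∈ p.edges := by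
  classical
  intro u v p
  induction p with
  | nil =>
    intro _ hx hy hxy
    rw [Walk.support_nil, List.mem_singleton] at hx hy
    exact absurd hxy (by rw [hx, hy]; exact G.loopless.irrefl _)
  | @cons a b c h q ih =>
    intro hmin hx hy hxy
    rw [Walk.support_cons, List.mem_cons] at hx hy
    have hqmin : ∀ r : G.Walk b c, q.length ≤ r.length := fun r => by
      have := hmin (Walk.cons h r)
      simpa [Walk.length_cons] using this
    have key : ∀ {x' y' : V'}, x' = a → y' ∈ q.support → G.Adj x' y' →
        s(x', y') ∈ (Walk.cons h q).edges := by
      rintro x' y' rfl hy' hxy'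
      have hdrop := hmin (Walk.cons hxy' (q.dropUntil y' hy'))
      have hlen : (q.takeUntil y' hy').length + (q.dropUntil y' hy').length = q.length := by
        rw [← Walk.length_append, q.take_spec hy']
    
      rw [Walk.length_cons, Walk.length_cons] at hdrop
      have h0 : (q.takeUntil y' hy').length = 0 := by omega
      have hb : b = y' := Walk.eq_of_length_eq_zero h0
      subst hb
      rw [Walk.edges_cons]
      exact List.mem_cons_self
    rcases hx with rfl | hx <;> rcases hy with rfl | hy
    · exact absurd hxy (G.loopless.irrefl _)
    · exact key rfl hy hxy
    · have := key rfl hx hxy.symm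
      rwa [Sym2.eq_swap] at this
    · rw [Walk.edges_cons]
      exact List.mem_cons_of_mem _ (ih hqmin hx hy hxy)

private lemma isCycle_append_reverse {V' : Type*} {G : SimpleGraph V'} {x y : V'} (hxy : x ≠ y)
    {p q : G.Walk x y} (hp : p.IsPath) (hq : q.IsPath)
    (hsupp : ∀ z, z ∈ p.support → z ∈ q.support → z = x ∨ z = y)
    (hedge : ∀ e, e ∈ p.edges → e ∉ q.edges) :
    (p.append q.reverse).IsCycle := by
  refine ⟨⟨⟨?_⟩, ?_⟩, ?_⟩
  · rw [Walk.edges_append, Walk.edges_reverse]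
    exact List.Nodup.append hp.isTrail.edges_nodup (List.nodup_reverse.2 hq.isTrail.edges_nodup)
      (fun e he he' => hedge e he (List.mem_reverse.1 he'))
  · intro hnil
    have h0 : (p.append q.reverse).length = 0 := by rw [hnil]; rfl
    rw [Walk.length_append] at h0
    exact hxy (Walk.eq_of_length_eq_zero (p := p) (by omega))
  · rw [Walk.tail_support_append]
    have hnd1 : p.support.tail.Nodup := hp.support_nodup.tail
    have hnd2 : q.reverse.support.tail.Nodup := hq.reverse.support_nodup.tail
    refine List.Nodup.append hnd1 hnd2 ?_
    intro z hz1 hz2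
    have hzp : z ∈ p.support := List.mem_of_mem_tail hz1
    have hzq : z ∈ q.support := by
      have := List.mem_of_mem_tail hz2
      rwa [Walk.support_reverse, List.mem_reverse] at this
    rcases hsupp z hzp hzq with rfl | rfl
    · have : z ∉ p.support.tail := by
        have h := hp.support_nodup
        rw [p.support_eq_cons] at h
        exact (List.nodup_cons.1 h).1
      exact this hz1
    · have : z ∉ q.reverse.support.tail := by
        have h := hq.reverse.support_nodup
        rw [q.reverse.support_eq_cons] at h
        exact (List.nodup_cons.1 h).1
      exact this hz2

end ChordalAux
section ChordalAux2

open SimpleGraph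

private lemma supp_sub' {A : Set W} : ∀ {u v : W} (p : (presGraph W A).Walk u v),
    u ∈ A → v ∈ A → ∀ x ∈ p.support, x ∈ A := by
  intro u v p
  induction p with
  | nil =>
    intro hu _ x hx
    rw [Walk.support_nil, List.mem_singleton] at hx
    exact hx ▸ hu
  | @cons a b c h q ih =>
    intro hu hv x hx
    rw [Walk.support_cons, List.mem_cons] at hx
    rcases hx with rfl | hx
    · exact hu
    · exact ih h.2.2.1 hv x hx

private lemma edge_consecutive {V' : Type*} {G : SimpleGraph V'} {x y : V'} :
    ∀ {u v : V'} (p : G.Walk u v), s(x, y) ∈ p.edges →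
      ∃ i : ℕ, ∃ h : i + 1 < p.support.length,
        (p.support[i]'(Nat.lt_of_succ_lt h) = x ∧ p.support[i+1]'h = y) ∨
        (p.support[i]'(Nat.lt_of_succ_lt h) = y ∧ p.support[i+1]'h = x) := by
  intro u v p
  induction p with
  | nil => intro he; simp at he
  | @cons a b cc h q ih =>
    intro he
    rw [Walk.edges_cons, List.mem_cons] at he
    have hsupc : (Walk.cons h q).support = a :: q.support := Walk.support_cons h q
    have hlenq : 0 < q.support.length := List.length_pos_iff.2 q.support_ne_nil
    rcases he with heq | he'
    · have hlen : 0 + 1 < (Walk.cons h q).support.length := by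
        rw [hsupc, List.length_cons]; omega
      refine ⟨0, hlen, ?_⟩
      have h0 : (Walk.cons h q).support[0]'(Nat.lt_of_succ_lt hlen) = a := by
        rw [List.getElem_of_eq hsupc]; simp
      have h1 : (Walk.cons h q).support[0+1]'hlen = b := by
        rw [List.getElem_of_eq hsupc, List.getElem_cons_succ]
        rw [List.getElem_of_eq q.support_eq_cons]
        simp
      rcases Sym2.eq_iff.1 heq with ⟨rfl, rfl⟩ | ⟨rfl, rfl⟩
      · exact Or.inl ⟨h0, h1⟩
      · exact Or.inr ⟨h0, h1⟩
    · obtain ⟨i, hilt, hcase⟩ := ih he'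
      have hlen : (i + 1) + 1 < (Walk.cons h q).support.length := by
        rw [hsupc, List.length_cons]; omega
      refine ⟨i + 1, hlen, ?_⟩
      have h0 : (Walk.cons h q).support[i+1]'(Nat.lt_of_succ_lt hlen) =
          q.support[i]'(Nat.lt_of_succ_lt hilt) := by
        rw [List.getElem_of_eq hsupc, List.getElem_cons_succ]
      have h1 : (Walk.cons h q).support[(i+1)+1]'hlen = q.support[i+1]'hilt := by
        rw [List.getElem_of_eq hsupc, List.getElem_cons_succ]
      rw [h0, h1]
      exact hcase

private lemma end_mem_support_tail {V' : Type*} {G : SimpleGraph V'} {v : V'}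
    (c : G.Walk v v) (hc : c ≠ Walk.nil) : v ∈ c.support.tail := by
  cases c with
  | nil => exact absurd rfl hc
  | cons h q =>
    rw [Walk.support_cons, List.tail_cons]
    exact q.end_mem_support

private lemma closed_supp_sub {A : Set W} {v : W} (c : (presGraph W A).Walk v v)
    (hc : c ≠ Walk.nil) : ∀ z ∈ c.support, z ∈ A := by
  cases c with
  | nil => exact absurd rfl hc
  | cons h q =>
    intro z hz
    rw [Walk.support_cons, List.mem_cons] at hz
    rcases hz with rfl | hz
    · exact h.2.1
    · exact supp_sub' q h.2.2.1 h.2.1 z hz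

private lemma no_reach_pair {A : Set W} {a b : W} (hA : A ⊆ {a, b}) (hab : a ≠ b)
    (h0 : orderOf (a * b) = 0) : ¬(presGraph W A).Reachable a b := by
  rintro ⟨p⟩
  obtain ⟨w, hadj, q, -⟩ := Walk.exists_eq_cons_of_ne hab p
  have hw := hA hadj.2.2.1
  simp only [Set.mem_insert_iff, Set.mem_singleton_iff] at hw
  rcases hw with rfl | rfl
  · exact hadj.1 rfl
  · exact hadj.2.2.2 h0

private lemma two_le_length {A : Set W} {x y : W} (hxy : x ≠ y) (h0 : orderOf (x * y) = 0)
    (p : (presGraph W A).Walk x y) : 2 ≤ p.length := by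
  cases p with
  | nil => exact absurd rfl hxy
  | @cons _ b _ h q =>
    rcases Nat.eq_zero_or_pos q.length with hq | hq
    · have hb : b = y := Walk.eq_of_length_eq_zero hq
      subst hb
      exact absurd h0 h.2.2.2
    · rw [Walk.length_cons]; omega

private lemma mul_self_eq_one_of_mem {S : Set W} (hcox : IsCoxeterGeneratingSet W S)
    {s : W} (hs : s ∈ S) : s * s = 1 := by
  obtain ⟨M, cs, hsimple⟩ := hcox
  have h := cs.simple_mul_simple_self ⟨s, hs⟩
  rwa [hsimple ⟨s, hs⟩] at h

private lemma ne_of_orderOf_mul_eq_zero {S : Set W} (hcox : IsCoxeterGeneratingSet W S)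
    {s t : W} (hs : s ∈ S) (h0 : orderOf (s * t) = 0) : s ≠ t := by
  rintro rfl
  rw [mul_self_eq_one_of_mem hcox hs, orderOf_one] at h0
  exact one_ne_zero h0

private lemma reach_mem_support' {V' : Type*} {G : SimpleGraph V'} :
    ∀ {u v : V'} (p : G.Walk u v) {x : V'}, x ∈ p.support → G.Reachable u x := by
  intro u v p
  induction p with
  | nil =>
    intro x hx
    rw [Walk.support_nil, List.mem_singleton] at hx
    exact hx ▸ Reachable.refl _
  | @cons a b c h q ih =>
    intro x hx
    rw [Walk.support_cons, List.mem_cons] at hx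
    rcases hx with rfl | hx
    · exact Reachable.refl _
    · exact h.reachable.trans (ih hx)

private lemma reach_of_supp' {A B : Set W} : ∀ {u v : W} (p : (presGraph W A).Walk u v),
    (∀ x ∈ p.support, x ∈ B) → (presGraph W B).Reachable u v := by
  intro u v p
  induction p with
  | nil => exact fun _ => Reachable.refl _
  | @cons a b c hadj q ih =>
    intro h
    have hab : (presGraph W B).Adj a b :=
      ⟨hadj.1, h a (by rw [Walk.support_cons]; exact List.mem_cons_self),
        h b (by rw [Walk.support_cons]; exact List.mem_cons_of_mem _ q.start_mem_support),
        hadj.2.2.2⟩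
    exact hab.reachable.trans
      (ih fun x hx => h x (by rw [Walk.support_cons]; exact List.mem_cons_of_mem _ hx))

private lemma reach_union_aux {A : Set W} {c0 x y zx zy : W}
    (hzx : zx ∈ A) (hzy : zy ∈ A)
    (hrzx : (presGraph W A).Reachable c0 zx) (hrzy : (presGraph W A).Reachable c0 zy)
    (hxzx : x ≠ zx) (hox : orderOf (x * zx) ≠ 0)
    (hzyy : zy ≠ y) (hoy : orderOf (zy * y) ≠ 0) :
    (presGraph W (({z | (presGraph W A).Reachable c0 z} ∩ A) ∪ {x, y})).Reachable x y := by
  set A' := ({z | (presGraph W A).Reachable c0 z} ∩ A) ∪ ({x, y} : Set W) with hA'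
  have hxA : x ∈ A' := Set.mem_union_right _ (Set.mem_insert _ _)
  have hyA : y ∈ A' := Set.mem_union_right _ (Set.mem_insert_of_mem _ rfl)
  have hzxA : zx ∈ A' := Set.mem_union_left _ ⟨hrzx, hzx⟩
  have hzyA : zy ∈ A' := Set.mem_union_left _ ⟨hrzy, hzy⟩
  obtain ⟨w⟩ := hrzx.symm.trans hrzy
  have hsup : ∀ z ∈ w.support, z ∈ A' := fun z hz =>
    Set.mem_union_left _ ⟨hrzx.trans (reach_mem_support' w hz), supp_sub' w hzx hzy z hz⟩
  have h1 : (presGraph W A').Adj x zx := ⟨hxzx, hxA, hzxA, hox⟩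
  have h2 : (presGraph W A').Adj zy y := ⟨hzyy, hzyA, hyA, hoy⟩
  exact h1.reachable.trans ((reach_of_supp' w hsup).trans h2.reachable)

end ChordalAux2

section Forward

open SimpleGraph

private lemma forward {S : Set W} (hcox : IsCoxeterGeneratingSet W S) (hfin : S.Finite)
    (hc : (presGraph W S).IsChordalGraph) {R : Set W} (hRS : R ⊆ S)
    (hns : ¬ SeparatedByComplete W R) : IsCompleteSet W R := by
  classical
  intro a ha b hb h0
  have hab : a ≠ b := ne_of_orderOf_mul_eq_zero hcox (hRS ha) h0
  -- There is a separator of a and b inside R, avoiding a and b.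
  have hT0 : (R \ {a, b} : Set W) ⊆ R ∧ a ∉ R \ ({a, b} : Set W) ∧ b ∉ R \ ({a, b} : Set W) ∧
      ¬(presGraph W (R \ (R \ {a, b}))).Reachable a b := by
    refine ⟨Set.diff_subset, fun h => h.2 (by simp), fun h => h.2 (by simp), ?_⟩
    refine no_reach_pair ?_ hab h0
    rintro z ⟨hzR, hz2⟩
    by_contra hzab
    exact hz2 ⟨hzR, hzab⟩
  have hex : ∃ n, ∃ T : Set W, (T ⊆ R ∧ a ∉ T ∧ b ∉ T ∧
      ¬(presGraph W (R \ T)).Reachable a b) ∧ T.ncard = n :=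
    ⟨_, R \ {a, b}, hT0, rfl⟩
  obtain ⟨T, hT, hTcard⟩ := Nat.find_spec hex
  obtain ⟨hTR, haT, hbT, hnr⟩ := hT
  have hmin : ∀ T' : Set W, T' ⊆ R → a ∉ T' → b ∉ T' →
      ¬(presGraph W (R \ T')).Reachable a b → T.ncard ≤ T'.ncard := by
    intro T' h1 h2 h3 h4
    rw [hTcard]
    exact Nat.find_min' hex ⟨T', ⟨h1, h2, h3, h4⟩, rfl⟩
  have haRT : a ∈ R \ T := ⟨ha, haT⟩
  have hbRT : b ∈ R \ T := ⟨hb, hbT⟩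
  -- T is not complete
  have hTnc : ¬ IsCompleteSet W T := fun hcomp =>
    hns ⟨T, hTR, hcomp, a, haRT, b, hbRT, hnr⟩
  rw [IsCompleteSet] at hTnc
  push_neg at hTnc
  obtain ⟨x, hxT, y, hyT, hxy0⟩ := hTnc
  have hxyne : x ≠ y := ne_of_orderOf_mul_eq_zero hcox (hRS (hTR hxT)) hxy0
  have hxS : x ∈ S := hRS (hTR hxT)
  have hyS : y ∈ S := hRS (hTR hyT)
  -- every element of T has a neighbor in the component of a and in the component of b
  have nbr : ∀ t ∈ T,
      (∃ z, z ∈ R \ T ∧ (presGraph W (R \ T)).Reachable a z ∧ (presGraph W S).Adj z t) ∧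
      (∃ z, z ∈ R \ T ∧ (presGraph W (R \ T)).Reachable b z ∧ (presGraph W S).Adj z t) := by
    intro t ht
    have htR : t ∈ R := hTR ht
    have hta : t ≠ a := fun h => haT (h ▸ ht)
    have htb : t ≠ b := fun h => hbT (h ▸ ht)
    have hfinT : T.Finite := hfin.subset (hTR.trans hRS)
    have hcard : (T \ {t}).ncard < T.ncard := Set.ncard_diff_singleton_lt_of_mem ht hfinT
    have hreach : (presGraph W (R \ (T \ {t}))).Reachable a b := by
      by_contra hnr'
      have hle := hmin (T \ {t}) (fun z hz => hTR hz.1) (fun h => haT h.1) (fun h => hbT h.1) hnr'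
      omega
    obtain ⟨w0⟩ := hreach
    have hp : w0.bypass.IsPath := w0.bypass_isPath
    set p := w0.bypass with hpdef
    have haR' : a ∈ R \ (T \ {t}) := ⟨ha, fun h => haT h.1⟩
    have hbR' : b ∈ R \ (T \ {t}) := ⟨hb, fun h => hbT h.1⟩
    have hsubRT : ∀ z, z ∈ R \ (T \ {t}) → z ≠ t → z ∈ R \ T := by
      rintro z ⟨hzR, hz2⟩ hzt
      exact ⟨hzR, fun hzT => hz2 ⟨hzT, hzt⟩⟩
    by_cases htp : t ∈ p.support
    · constructor
      · -- a-side
        have hp1 : (p.takeUntil t htp).IsPath := hp.takeUntil htp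
        have hp1r : (p.takeUntil t htp).reverse.IsPath := hp1.reverse
        obtain ⟨z, hadj, q, heq⟩ := Walk.exists_eq_cons_of_ne hta (p.takeUntil t htp).reverse
        have hznt : z ≠ t := hadj.1.symm
        have htq : t ∉ q.support := by
          have hnd := hp1r.support_nodup
          rw [heq, Walk.support_cons] at hnd
          exact (List.nodup_cons.1 hnd).1
        have hzRT : z ∈ R \ T := hsubRT z hadj.2.2.1 hznt
        have hq : ∀ w' ∈ q.support, w' ∈ R \ T := fun w' hw' =>
          hsubRT w' (supp_sub' q hadj.2.2.1 haR' w' hw') (fun h => htq (h ▸ hw'))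
        refine ⟨z, hzRT, (reach_of_supp' q hq).symm, ?_⟩
        have hadj' := hadj.symm
        exact ⟨hadj'.1, hRS hzRT.1, hRS htR, hadj'.2.2.2⟩
      · -- b-side
        have hp2 : (p.dropUntil t htp).IsPath := hp.dropUntil htp
        obtain ⟨z, hadj, q, heq⟩ := Walk.exists_eq_cons_of_ne htb (p.dropUntil t htp)
        have hznt : z ≠ t := hadj.1.symm
        have htq : t ∉ q.support := by
          have hnd := hp2.support_nodup
          rw [heq, Walk.support_cons] at hnd
          exact (List.nodup_cons.1 hnd).1
        have hzRT : z ∈ R \ T := hsubRT z hadj.2.2.1 hznt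
        have hq : ∀ w' ∈ q.support, w' ∈ R \ T := fun w' hw' =>
          hsubRT w' (supp_sub' q hadj.2.2.1 hbR' w' hw') (fun h => htq (h ▸ hw'))
        refine ⟨z, hzRT, (reach_of_supp' q hq).symm, ?_⟩
        have hadj' := hadj.symm
        exact ⟨hadj'.1, hRS hzRT.1, hRS htR, hadj'.2.2.2⟩
    · exfalso
      have hq : ∀ z ∈ p.support, z ∈ R \ T := fun z hz =>
        hsubRT z (supp_sub' p haR' hbR' z hz) (fun h => htp (h ▸ hz))
      exact hnr (reach_of_supp' p hq)
  obtain ⟨⟨zx, hzx, hrzx, hazx⟩, ⟨zx', hzx', hrzx', hbzx⟩⟩ := nbr x hxT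
  obtain ⟨⟨zy, hzy, hrzy, hazy⟩, ⟨zy', hzy', hrzy', hbzy⟩⟩ := nbr y hyT
  -- reachability of x and y within each side
  have hreachA : (presGraph W (({z | (presGraph W (R \ T)).Reachable a z} ∩ (R \ T)) ∪ {x, y})).Reachable x y := by
    refine reach_union_aux hzx hzy hrzx hrzy ?_ hazx.symm.2.2.2 ?_ hazy.2.2.2
    · exact fun h => hzx.2 (h ▸ hxT)
    · exact fun h => hzy.2 (h ▸ hyT)
  have hreachB : (presGraph W (({z | (presGraph W (R \ T)).Reachable b z} ∩ (R \ T)) ∪ {x, y})).Reachable x y := by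
    refine reach_union_aux hzx' hzy' hrzx' hrzy' ?_ hbzx.symm.2.2.2 ?_ hbzy.2.2.2
    · exact fun h => hzx'.2 (h ▸ hxT)
    · exact fun h => hzy'.2 (h ▸ hyT)
  obtain ⟨pa, hpaP, hpamin⟩ := exists_min_path hreachA
  obtain ⟨pb, hpbP, hpbmin⟩ := exists_min_path hreachB
  have hxA1 : x ∈ (({z | (presGraph W (R \ T)).Reachable a z} ∩ (R \ T)) ∪ {x, y}) := Set.mem_union_right _ (Set.mem_insert _ _)
  have hyA1 : y ∈ (({z | (presGraph W (R \ T)).Reachable a z} ∩ (R \ T)) ∪ {x, y}) := Set.mem_union_right _ (Set.mem_insert_of_mem _ rfl)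
  have hxA2 : x ∈ (({z | (presGraph W (R \ T)).Reachable b z} ∩ (R \ T)) ∪ {x, y}) := Set.mem_union_right _ (Set.mem_insert _ _)
  have hyA2 : y ∈ (({z | (presGraph W (R \ T)).Reachable b z} ∩ (R \ T)) ∪ {x, y}) := Set.mem_union_right _ (Set.mem_insert_of_mem _ rfl)
  have hA1S : (({z | (presGraph W (R \ T)).Reachable a z} ∩ (R \ T)) ∪ {x, y}) ⊆ S := by
    rintro z (⟨-, hz⟩ | hz)
    · exact hRS hz.1
    · rcases hz with rfl | hz
      · exact hxS
      · exact hz ▸ hyS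
  have hA2S : (({z | (presGraph W (R \ T)).Reachable b z} ∩ (R \ T)) ∪ {x, y}) ⊆ S := by
    rintro z (⟨-, hz⟩ | hz)
    · exact hRS hz.1
    · rcases hz with rfl | hz
      · exact hxS
      · exact hz ▸ hyS
  have hsupA1 : ∀ z ∈ pa.support, z ∈ (({z | (presGraph W (R \ T)).Reachable a z} ∩ (R \ T)) ∪ {x, y}) := supp_sub' pa hxA1 hyA1
  have hsupA2 : ∀ z ∈ pb.support, z ∈ (({z | (presGraph W (R \ T)).Reachable b z} ∩ (R \ T)) ∪ {x, y}) := supp_sub' pb hxA2 hyA2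
  have hinter : ∀ z, z ∈ pa.support → z ∈ pb.support → z = x ∨ z = y := by
    intro z h1 h2
    rcases hsupA1 z h1 with ⟨hza, -⟩ | hz
    · rcases hsupA2 z h2 with ⟨hzb, -⟩ | hz
      · exact absurd (hza.trans hzb.symm) hnr
      · simpa using hz
    · simpa using hz
  have hedges : ∀ e, e ∈ pa.edges → e ∉ pb.edges := by
    intro e hea heb
    induction e using Sym2.ind with
    | _ u w =>
      have hu1 : u ∈ pa.support := pa.fst_mem_support_of_mem_edges hea
      have hw1 : w ∈ pa.support := pa.snd_mem_support_of_mem_edges hea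
      have hu2 : u ∈ pb.support := pb.fst_mem_support_of_mem_edges heb
      have hw2 : w ∈ pb.support := pb.snd_mem_support_of_mem_edges heb
      have hadjuw : (presGraph W (({z | (presGraph W (R \ T)).Reachable a z} ∩ (R \ T)) ∪ {x, y})).Adj u w := pa.edges_subset_edgeSet hea
      rcases hinter u hu1 hu2 with rfl | rfl <;> rcases hinter w hw1 hw2 with rfl | rfl
      · exact hadjuw.ne rfl
      · exact hadjuw.2.2.2 hxy0
      · exact hadjuw.symm.2.2.2 hxy0
      · exact hadjuw.ne rfl
  have hedgesubA1 : ∀ e ∈ pa.edges, e ∈ (presGraph W S).edgeSet := fun e he =>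
    SimpleGraph.edgeSet_mono (presGraph_mono hA1S) (pa.edges_subset_edgeSet he)
  have hedgesubA2 : ∀ e ∈ pb.edges, e ∈ (presGraph W S).edgeSet := fun e he =>
    SimpleGraph.edgeSet_mono (presGraph_mono hA2S) (pb.edges_subset_edgeSet he)
  have hcyc : ((pa.transfer (presGraph W S) hedgesubA1).append (pb.transfer (presGraph W S) hedgesubA2).reverse).IsCycle := by
    apply isCycle_append_reverse hxyne (hpaP.transfer _) (hpbP.transfer _)
    · intro z h1 h2
      rw [Walk.support_transfer] at h1
      rw [Walk.support_transfer] at h2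
      exact hinter z h1 h2
    · intro e he heb
      rw [Walk.edges_transfer] at he
      rw [Walk.edges_transfer] at heb
      exact hedges e he heb
  have hlen : 4 ≤ ((pa.transfer (presGraph W S) hedgesubA1).append (pb.transfer (presGraph W S) hedgesubA2).reverse).length := by
    rw [Walk.length_append, Walk.length_reverse,
      Walk.length_transfer, Walk.length_transfer]
    have l1 := two_le_length hxyne hxy0 pa
    have l2 := two_le_length hxyne hxy0 pb
    omega
  obtain ⟨u, w, hu, hw, hadj, hne⟩ := hc x _ hcyc hlen
  rw [Walk.mem_support_append_iff] at hu hw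
  simp only [Walk.support_reverse, List.mem_reverse, Walk.support_transfer] at hu hw
  have hmemedge : ∀ e, e ∈ pa.edges ∨ e ∈ pb.edges → e ∈ ((pa.transfer (presGraph W S) hedgesubA1).append (pb.transfer (presGraph W S) hedgesubA2).reverse).edges := by
    intro e he
    rw [Walk.edges_append, List.mem_append, Walk.edges_reverse, List.mem_reverse,
      Walk.edges_transfer, Walk.edges_transfer]
    exact he
  have case1 : u ∈ pa.support → w ∈ pa.support → False := by
    intro h1 h2
    have hadj1 : (presGraph W (({z | (presGraph W (R \ T)).Reachable a z} ∩ (R \ T)) ∪ {x, y})).Adj u w := ⟨hadj.1, hsupA1 u h1, hsupA1 w h2, hadj.2.2.2⟩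
    exact hne (hmemedge _ (Or.inl (min_walk_adj_mem_edges pa hpamin h1 h2 hadj1)))
  have case2 : u ∈ pb.support → w ∈ pb.support → False := by
    intro h1 h2
    have hadj2 : (presGraph W (({z | (presGraph W (R \ T)).Reachable b z} ∩ (R \ T)) ∪ {x, y})).Adj u w := ⟨hadj.1, hsupA2 u h1, hsupA2 w h2, hadj.2.2.2⟩
    exact hne (hmemedge _ (Or.inr (min_walk_adj_mem_edges pb hpbmin h1 h2 hadj2)))
  have mixed : ∀ u' w', (presGraph W S).Adj u' w' → u' ∈ pa.support → u' ∉ pb.support →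
      w' ∈ pb.support → w' ∉ pa.support → False := by
    intro u' w' hadj' h1 h2 h3 h4
    have hu' : (presGraph W (R \ T)).Reachable a u' ∧ u' ∈ R \ T := by
      rcases hsupA1 u' h1 with h | h
      · exact h
      · exfalso
        rcases (by simpa using h : u' = x ∨ u' = y) with rfl | rfl
        · exact h2 pb.start_mem_support
        · exact h2 pb.end_mem_support
    have hw' : (presGraph W (R \ T)).Reachable b w' ∧ w' ∈ R \ T := by
      rcases hsupA2 w' h3 with h | h
      · exact h
      · exfalso
        rcases (by simpa using h : w' = x ∨ w' = y) with rfl | rfl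
        · exact h4 pa.start_mem_support
        · exact h4 pa.end_mem_support
    have hadjRT : (presGraph W (R \ T)).Adj u' w' := ⟨hadj'.1, hu'.2, hw'.2, hadj'.2.2.2⟩
    exact hnr (hu'.1.trans (hadjRT.reachable.trans hw'.1.symm))
  rcases hu with h1 | h1 <;> rcases hw with h2 | h2
  · exact case1 h1 h2
  · by_cases h3 : w ∈ pa.support
    · exact case1 h1 h3
    · by_cases h4 : u ∈ pb.support
      · exact case2 h4 h2
      · exact mixed u w hadj h1 h4 h2 h3
  · by_cases h3 : u ∈ pa.support
    · exact case1 h3 h2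
    · by_cases h4 : w ∈ pb.support
      · exact case2 h1 h4
      · exact mixed w u hadj.symm h2 h4 h1 h3
  · exact case2 h1 h2

end Forward

section Backward

open SimpleGraph

private lemma getElem_idx_congr {α : Type*} {l : List α} {i j : ℕ} (h : i = j)
    (hi : i < l.length) : l[i]'hi = l[j]'(h ▸ hi) := by subst h; rfl

private lemma backward {S : Set W} (hfin : S.Finite)
    (H : ∀ R, R ⊆ S → ¬ SeparatedByComplete W R →
      (∀ R', R ⊆ R' → R' ⊆ S → ¬ SeparatedByComplete W R' → R' = R) →
      IsCompleteSet W R) :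
    (presGraph W S).IsChordalGraph := by
  classical
  intro v c hcyc hlen
  by_contra hch
  have hch' : ∀ u w, u ∈ c.support → w ∈ c.support → (presGraph W S).Adj u w →
      s(u, w) ∈ c.edges := by
    intro u w h1 h2 h3
    by_contra h4
    exact hch ⟨u, w, h1, h2, h3, h4⟩
  have hcne : c ≠ Walk.nil := hcyc.ne_nil
  have hRS : ({z | z ∈ c.support} : Set W) ⊆ S := fun z hz => closed_supp_sub c hcne z hz
  have hvtail : v ∈ c.support.tail := end_mem_support_tail c hcne
  have hmemtail : ∀ z ∈ c.support, z ∈ c.support.tail := by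
    intro z hz
    rw [c.support_eq_cons, List.mem_cons] at hz
    rcases hz with rfl | hz
    · exact hvtail
    · exact hz
  have hnotsep : ¬ SeparatedByComplete W ({z | z ∈ c.support} : Set W) := by
    rintro ⟨T, hTR, hTc, a, ⟨haR, haT⟩, b, ⟨hbR, hbT⟩, hnr⟩
    apply hnr
    rcases eq_or_ne a b with rfl | hab
    · exact Reachable.refl _
    have ha' : a ∈ c.support := haR
    have hb' : b ∈ (c.rotate a ha').support := by
      refine List.mem_of_mem_tail ?_
      exact ((c.support_rotate a ha').perm.mem_iff).2 (hmemtail b hbR)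
    have hcyc' : (c.rotate a ha').IsCycle := hcyc.rotate ha'
    have hsupp_eq : (c.rotate a ha').support =
        ((c.rotate a ha').takeUntil b hb').support ++ ((c.rotate a ha').dropUntil b hb').support.tail := by
      conv_lhs => rw [← (c.rotate a ha').take_spec hb']
      exact Walk.support_append _ _
    have htail_eq : (c.rotate a ha').support.tail =
        ((c.rotate a ha').takeUntil b hb').support.tail ++ ((c.rotate a ha').dropUntil b hb').support.tail := by
      conv_lhs => rw [← (c.rotate a ha').take_spec hb']
      exact Walk.tail_support_append _ _
    have hedges_eq : (c.rotate a ha').edges =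
        ((c.rotate a ha').takeUntil b hb').edges ++ ((c.rotate a ha').dropUntil b hb').edges := by
      conv_lhs => rw [← (c.rotate a ha').take_spec hb']
      exact Walk.edges_append _ _
    have hnd : (((c.rotate a ha').takeUntil b hb').support.tail ++
        ((c.rotate a ha').dropUntil b hb').support.tail).Nodup := by
      rw [← htail_eq]; exact hcyc'.support_nodup
    have hdisj := (List.nodup_append.1 hnd).2.2
    have hD : ∀ z, z ≠ a → z ≠ b → z ∈ ((c.rotate a ha').takeUntil b hb').support →
        z ∈ ((c.rotate a ha').dropUntil b hb').support → False := by
      intro z hza hzb h1m h2m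
      have h1t : z ∈ ((c.rotate a ha').takeUntil b hb').support.tail := by
        rw [((c.rotate a ha').takeUntil b hb').support_eq_cons, List.mem_cons] at h1m
        rcases h1m with rfl | h1m
        · exact absurd rfl hza
        · exact h1m
      have h2t : z ∈ ((c.rotate a ha').dropUntil b hb').support.tail := by
        rw [((c.rotate a ha').dropUntil b hb').support_eq_cons, List.mem_cons] at h2m
        rcases h2m with rfl | h2m
        · exact absurd rfl hzb
        · exact h2m
      exact hdisj z h1t z h2t rfl
    have hc'sub : ∀ z ∈ (c.rotate a ha').support, z ∈ c.support := by
      intro z hz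
      rw [(c.rotate a ha').support_eq_cons, List.mem_cons] at hz
      rcases hz with rfl | hz
      · exact ha'
      · exact List.mem_of_mem_tail (((c.support_rotate a ha').perm.mem_iff).1 hz)
    have hRc' : ∀ z ∈ c.support, z ∈ (c.rotate a ha').support := fun z hz =>
      List.mem_of_mem_tail (((c.support_rotate a ha').perm.mem_iff).2 (hmemtail z hz))
    have hF : (∀ z ∈ T, z ∉ ((c.rotate a ha').takeUntil b hb').support) ∨
        (∀ z ∈ T, z ∉ ((c.rotate a ha').dropUntil b hb').support) := by
      by_contra hcon
      push_neg at hcon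
      obtain ⟨⟨z1, hz1T, hz1⟩, ⟨z2, hz2T, hz2⟩⟩ := hcon
      have hz1a : z1 ≠ a := fun h => haT (h ▸ hz1T)
      have hz1b : z1 ≠ b := fun h => hbT (h ▸ hz1T)
      have hz2a : z2 ≠ a := fun h => haT (h ▸ hz2T)
      have hz2b : z2 ≠ b := fun h => hbT (h ▸ hz2T)
      rcases eq_or_ne z1 z2 with rfl | hzz
      · exact hD z1 hz1a hz1b hz1 hz2
      · have hadj12 : (presGraph W S).Adj z1 z2 :=
          ⟨hzz, hRS (hTR hz1T), hRS (hTR hz2T), hTc z1 hz1T z2 hz2T⟩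
        have hedge : s(z1, z2) ∈ c.edges := hch' z1 z2 (hTR hz1T) (hTR hz2T) hadj12
        have hedge' : s(z1, z2) ∈ (c.rotate a ha').edges :=
          ((c.rotate_edges a ha').perm.mem_iff).2 hedge
        rw [hedges_eq, List.mem_append] at hedge'
        rcases hedge' with h | h
        · exact hD z2 hz2a hz2b (Walk.snd_mem_support_of_mem_edges _ h) hz2
        · exact hD z1 hz1a hz1b hz1 (Walk.fst_mem_support_of_mem_edges _ h)
    rcases hF with hF | hF
    · have hsup : ∀ z ∈ ((c.rotate a ha').takeUntil b hb').support,
          z ∈ ({z | z ∈ c.support} : Set W) \ T := by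
        intro z hz
        refine ⟨hc'sub z ?_, fun hzT => hF z hzT hz⟩
        rw [hsupp_eq, List.mem_append]
        exact Or.inl hz
      exact reach_of_supp' _ hsup
    · have hsup : ∀ z ∈ ((c.rotate a ha').dropUntil b hb').support,
          z ∈ ({z | z ∈ c.support} : Set W) \ T := by
        intro z hz
        refine ⟨hc'sub z ?_, fun hzT => hF z hzT hz⟩
        have : z ∈ (((c.rotate a ha').takeUntil b hb').append ((c.rotate a ha').dropUntil b hb')).support :=
          (Walk.mem_support_append_iff _ _).2 (Or.inr hz)
        rwa [(c.rotate a ha').take_spec hb'] at this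
      exact (reach_of_supp' _ hsup).symm
  -- extend to a maximal subset not separated by a complete subset
  obtain ⟨R', hR'mem, hR'max⟩ := Set.Finite.exists_maximalFor id
      {R' : Set W | {z | z ∈ c.support} ⊆ R' ∧ R' ⊆ S ∧ ¬ SeparatedByComplete W R'}
      (hfin.finite_subsets.subset fun R' hR' => hR'.2.1)
      ⟨{z | z ∈ c.support}, subset_rfl, hRS, hnotsep⟩
  obtain ⟨hRR', hR'S, hR'ns⟩ := hR'mem
  have hcomp : IsCompleteSet W R' := by
    refine H R' hR'S hR'ns ?_
    intro R'' h1 h2 h3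
    exact le_antisymm (hR'max ⟨hRR'.trans h1, h2, h3⟩ h1) h1
  -- now derive a chord, contradiction
  have hnd : c.support.tail.Nodup := hcyc.support_nodup
  have hsupeq : c.support = v :: c.support.tail := c.support_eq_cons
  have hslen : c.support.length = c.support.tail.length + 1 := by
    rw [hsupeq]; simp
  have hlt : c.support.tail.length = c.length := by
    have := c.length_support
    omega
  have h0lt : 0 < c.support.tail.length := by omega
  have h2lt : 2 < c.support.tail.length := by omega
  have hget : ∀ j (hj : j < c.support.tail.length),
      c.support[j+1]'(by omega) = c.support.tail[j]'hj := by
    intro j hj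
    rw [List.getElem_of_eq hsupeq, List.getElem_cons_succ]
  have hget0 : c.support[0]'(by omega) = v := by
    rw [List.getElem_of_eq hsupeq]
    simp
  have htne : c.support.tail ≠ [] := List.ne_nil_of_length_pos h0lt
  have hvlast : c.support.tail[c.support.tail.length - 1]'(by omega) = v := by
    have h2 : c.support[c.support.length - 1]'(by omega) = v := by
      rw [← List.getLast_eq_getElem c.support_ne_nil]
      exact c.getLast_support
    have h3 : c.support[c.support.tail.length - 1 + 1]'(by omega) = v := by
      rw [getElem_idx_congr (show c.support.tail.length - 1 + 1 = c.support.length - 1 by omega)]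
      exact h2
    rw [← hget _ (by omega)]
    exact h3
  have hxmem : c.support.tail[0]'h0lt ∈ c.support :=
    List.mem_of_mem_tail (List.getElem_mem _)
  have hymem : c.support.tail[2]'h2lt ∈ c.support :=
    List.mem_of_mem_tail (List.getElem_mem _)
  have hxyne : c.support.tail[0]'h0lt ≠ c.support.tail[2]'h2lt := by
    intro h
    have := hnd.getElem_inj_iff.1 h
    omega
  have hadjxy : (presGraph W S).Adj (c.support.tail[0]'h0lt) (c.support.tail[2]'h2lt) :=
    ⟨hxyne, hRS hxmem, hRS hymem,
      hcomp _ (hRR' hxmem) _ (hRR' hymem)⟩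
  have hedge := hch' _ _ hxmem hymem hadjxy
  obtain ⟨i, hi, hcase⟩ := edge_consecutive c hedge
  have hilt : i < c.support.tail.length := by omega
  rcases hcase with ⟨hA1, hA2⟩ | ⟨hA1, hA2⟩
  · rw [hget i hilt] at hA2
    have hi2 : i = 2 := hnd.getElem_inj_iff.1 hA2
    subst hi2
    rw [hget 1 (by omega)] at hA1
    have : (1 : ℕ) = 0 := hnd.getElem_inj_iff.1 hA1
    omega
  · rw [hget i hilt] at hA2
    have hi0 : i = 0 := hnd.getElem_inj_iff.1 hA2
    subst hi0
    rw [hget0] at hA1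
    have hv2 : c.support.tail[c.support.tail.length - 1]'(by omega) = c.support.tail[2]'h2lt :=
      hvlast.trans hA1
    have := hnd.getElem_inj_iff.1 hv2
    omega

end Backward

/-- Theorem 4.1. A Coxeter system `(W,S)` of finite rank is chordal
if and only if every maximal subset of `S` that is not separated by a complete subset
is itself complete (these maximal subsets generate exactly the vertex groups of a
visual reduced JSJ decomposition of `(W,S)` over 𝓕𝓐). -/
theorem chordal_iff_vertex_groups_complete {W : Type u} [Group W] (S : Set W)
    (hcox : IsCoxeterGeneratingSet W S) (hfin : S.Finite) :
    (presGraph W S).IsChordalGraph ↔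
      ∀ R, R ⊆ S → ¬ SeparatedByComplete W R →
        (∀ R', R ⊆ R' → R' ⊆ S → ¬ SeparatedByComplete W R' → R' = R) →
        IsCompleteSet W R := by
  constructor
  · intro hc R hRsub hns _
    exact forward hcox hfin hc hRsub hns
  · intro h
    exact backward hfin h
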